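/- Let M, N ≥ 1, let G : Fin M → Matrix (Fin N) (Fin N) ℂ, let y : Fin M → ℝ with y k > 0 for all k, set 𝒩 = ∑ k, y k, and let v : Fin M → ℂ be given by v k = Real.sqrt (y k / 𝒩). Define Λ = ∑ k, (Matrix.stdBasisMatrix k k 1) ⊗ₖ (G k) and, for φ : Fin N → ℂ, let w = Λ.mulVec (fun p => v p.1 * φ p.2). Then ∑ j, ‖∑ k, (starRingEnd ℂ (v k)) · w (k, j)‖² = ‖(∑ k, (y k) • (G k)).mulVec φ‖² / 𝒩². -/

import Mathlib

open Kronecker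

/-- Success probability of the measurement step: after projecting the ancilla back onto
`|y⟩`, the outcome probability equals `‖G φ‖²/𝒩²` with `G = ∑ₖ yₖ Gₖ`. -/
theorem stmt_15 (M N : ℕ) (hM : 1 ≤ M) (hN : 1 ≤ N)
    (G : Fin M → Matrix (Fin N) (Fin N) ℂ)
    (y : Fin M → ℝ) (hy : ∀ k, 0 < y k)
    (𝒩 : ℝ) (h𝒩 : 𝒩 = ∑ k, y k)
    (v : Fin M → ℂ) (hv : ∀ k, v k = (Real.sqrt (y k / 𝒩) : ℂ))
    (Λ : Matrix (Fin M × Fin N) (Fin M × Fin N) ℂ)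
    (hΛ : Λ = ∑ k, (Matrix.single k k 1) ⊗ₖ (G k))
    (φ : Fin N → ℂ) (w : Fin M × Fin N → ℂ)
    (hw : w = Λ.mulVec (fun p : Fin M × Fin N => v p.1 * φ p.2)) :
    ∑ j, ‖∑ k, (starRingEnd ℂ (v k)) * w (k, j)‖ ^ 2 =
      ‖(WithLp.equiv 2 (Fin N → ℂ)).symm ((∑ k, (y k) • (G k)).mulVec φ)‖ ^ 2 / 𝒩 ^ 2 := by
  have h𝒩pos : 0 < 𝒩 := by
    rw [h𝒩]
    exact Finset.sum_pos (fun k _ => hy k) (Finset.univ_nonempty_iff.2 ⟨⟨0, hM⟩⟩)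
  -- compute w
  have hwkj : ∀ (k : Fin M) (j : Fin N), w (k, j) = v k * (G k).mulVec φ j := by
    intro k j
    have hΛe : ∀ (k' : Fin M) (j' : Fin N),
        Λ (k, j) (k', j') = if k = k' then G k j j' else 0 := by
      intro k' j'
      simp only [hΛ, Matrix.sum_apply, Matrix.kroneckerMap_apply, Matrix.single,
        Matrix.of_apply, ite_and, boole_mul]
      rcases eq_or_ne k k' with rfl | hkk
      · simp [Finset.sum_ite_eq']
      · simp [hkk, Ne.symm hkk]
    simp only [hw, Matrix.mulVec, dotProduct, Finset.mul_sum]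
    rw [show (Finset.univ : Finset (Fin M × Fin N)) = Finset.univ ×ˢ Finset.univ from rfl,
      Finset.sum_product]
    simp only [hΛe, ite_mul, zero_mul]
    rw [Finset.sum_comm]
    simp only [Finset.sum_ite_eq, Finset.mem_univ, if_true]
    exact Finset.sum_congr rfl fun j' _ => by ring
  have hvsq : ∀ k, (starRingEnd ℂ) (v k) * v k = ((y k / 𝒩 : ℝ) : ℂ) := by
    intro k
    rw [hv k]
    rw [Complex.conj_ofReal, ← Complex.ofReal_mul, Real.mul_self_sqrt (div_nonneg (hy k).le h𝒩pos.le)]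
  have key : ∀ j, ∑ k, (starRingEnd ℂ) (v k) * w (k, j) =
      ((𝒩 : ℂ))⁻¹ * (∑ k, (y k) • (G k)).mulVec φ j := by
    intro j
    have : (∑ k, (y k) • (G k)).mulVec φ j = ∑ k, ((y k : ℂ)) * (G k).mulVec φ j := by
      simp only [Matrix.mulVec, dotProduct, Matrix.sum_apply, Matrix.smul_apply,
        Complex.real_smul, Finset.sum_mul, Finset.mul_sum]
      rw [Finset.sum_comm]
      exact Finset.sum_congr rfl fun k _ => Finset.sum_congr rfl fun j' _ => (mul_assoc _ _ _)
    rw [this, Finset.mul_sum]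
    refine Finset.sum_congr rfl fun k _ => ?_
    rw [hwkj, ← mul_assoc, hvsq]
    push_cast [div_eq_inv_mul]
    ring
  simp only [key]
  have hnorm : ‖(WithLp.equiv 2 (Fin N → ℂ)).symm ((∑ k, (y k) • (G k)).mulVec φ)‖ ^ 2 =
      ∑ j, ‖(∑ k, (y k) • (G k)).mulVec φ j‖ ^ 2 := by
    rw [EuclideanSpace.norm_eq, Real.sq_sqrt (by positivity)]
    rfl
  rw [hnorm, Finset.sum_div]
  refine Finset.sum_congr rfl fun j _ => ?_
  rw [norm_mul]
  have : ‖((𝒩 : ℂ))⁻¹‖ = 𝒩⁻¹ := by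
    rw [norm_inv, Complex.norm_real, Real.norm_of_nonneg h𝒩pos.le]
  rw [this, mul_pow, inv_pow, inv_mul_eq_div]
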